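/- Suppose 0 < η and η‖x_i‖² ≤ 1 for every i = 1, …, T. Then for every parameter w ∈ ℝ^m and every noise sequence v_1, …, v_T with y_i = x_iᵀw + v_i, the SGD iterates satisfy ‖w − w_T‖² + η Σ_{i=1}^T (x_iᵀw − x_iᵀw_{i−1})² ≤ ‖w − w_0‖² + η Σ_{i=1}^T v_i². In particular the SGD estimator makes the worst-case ratio of prediction-error energy to disturbance energy at most 1. -/
import Mathlib


open scoped RealInnerProductSpace

lemma sgd_step {m : ℕ} (xi d : EuclideanSpace ℝ (Fin m)) (η v : ℝ)
    (hη : 0 < η) (hs : η * ‖xi‖ ^ 2 ≤ 1) :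
    ‖d - (η * (⟪xi, d⟫ + v)) • xi‖ ^ 2 + η * ⟪xi, d⟫ ^ 2 ≤ ‖d‖ ^ 2 + η * v ^ 2 := by
  obtain ⟨e, he⟩ : ∃ e, ⟪xi, d⟫ = e := ⟨_, rfl⟩
  rw [he]
  have hexp : ‖d - (η * (e + v)) • xi‖ ^ 2
      = ‖d‖ ^ 2 - 2 * ((η * (e + v)) * e) + (η * (e + v)) ^ 2 * ‖xi‖ ^ 2 := by
    rw [norm_sub_sq_real, real_inner_smul_right, real_inner_comm xi d, he, norm_smul,
      Real.norm_eq_abs, mul_pow, sq_abs]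
  rw [hexp]
  have h2 : (η * (e + v)) ^ 2 * ‖xi‖ ^ 2 ≤ η * (e + v) ^ 2 := by
    nlinarith [mul_le_mul_of_nonneg_left hs (mul_nonneg hη.le (sq_nonneg (e + v)))]
  nlinarith [h2]

/-- upper bound part of Theorem 1: for small enough step size, SGD makes the
energy of the estimation errors at most the energy of the disturbances. -/
theorem stmt_2 {m : ℕ} (T : ℕ) (hT : 1 ≤ T)
    (x : ℕ → EuclideanSpace ℝ (Fin m)) (y : ℕ → ℝ)
    (η : ℝ) (hη : 0 < η)
    (hstep : ∀ i ∈ Finset.range T, η * ‖x (i + 1)‖ ^ 2 ≤ 1)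
    (w₀ : EuclideanSpace ℝ (Fin m))
    (w : ℕ → EuclideanSpace ℝ (Fin m)) (hw0 : w 0 = w₀)
    (hupd : ∀ i : ℕ,
      w (i + 1) = w i + (η * (y (i + 1) - ⟪x (i + 1), w i⟫)) • x (i + 1))
    (wstar : EuclideanSpace ℝ (Fin m)) (v : ℕ → ℝ)
    (hdata : ∀ i : ℕ, y (i + 1) = ⟪x (i + 1), wstar⟫ + v (i + 1)) :
    ‖wstar - w T‖ ^ 2
        + η * ∑ i ∈ Finset.range T, (⟪x (i + 1), wstar⟫ - ⟪x (i + 1), w i⟫) ^ 2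
      ≤ ‖wstar - w₀‖ ^ 2 + η * ∑ i ∈ Finset.range T, v (i + 1) ^ 2 := by
  subst hw0
  have key : ∀ n, n ≤ T →
      ‖wstar - w n‖ ^ 2
        + η * ∑ i ∈ Finset.range n, (⟪x (i + 1), wstar⟫ - ⟪x (i + 1), w i⟫) ^ 2
      ≤ ‖wstar - w 0‖ ^ 2 + η * ∑ i ∈ Finset.range n, v (i + 1) ^ 2 := by
    intro n
    induction n with
    | zero => simp
    | succ k ih =>
      intro hk
      have ihk := ih (le_of_lt (Nat.lt_of_succ_le hk))
      have hd : w (k + 1) = w k + (η * (y (k + 1) - ⟪x (k + 1), w k⟫)) • x (k + 1) := hupd k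
      have hy : y (k + 1) = ⟪x (k + 1), wstar⟫ + v (k + 1) := hdata k
      have hdiff : wstar - w (k + 1)
          = (wstar - w k) - (η * (⟪x (k + 1), wstar - w k⟫ + v (k + 1))) • x (k + 1) := by
        rw [hd, hy, inner_sub_right]
        module
      have hstepk : η * ‖x (k + 1)‖ ^ 2 ≤ 1 :=
        hstep k (Finset.mem_range.mpr (Nat.lt_of_succ_le hk))
      have step := sgd_step (x (k+1)) (wstar - w k) η (v (k+1)) hη hstepk
      rw [← hdiff] at step
      rw [Finset.sum_range_succ, Finset.sum_range_succ]
      have hinner : ⟪x (k + 1), wstar - w k⟫ = ⟪x (k + 1), wstar⟫ - ⟪x (k + 1), w k⟫ :=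
        inner_sub_right _ _ _
      rw [hinner] at step
      nlinarith [step, ihk]
  exact key T le_rfl
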